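/- For every natural number n and all integers t and m, 5·∑_{j=1}^n (−F_{m−3})^{n−j}·(F_{m+2})^j·G_{j+t−1}·G_{j+t}·G_{j+t+1}·G_{j+t+2}·G_{j+t+m} = F_{m+2}^{n+1}·G_{n+t+1}^5 − (−F_{m−3})^n·F_{m+2}·G_{t+1}^5 − λ²·(F_{m+2}^{n+1}·G_{n+t+1} − (−F_{m−3})^n·F_{m+2}·G_{t+1}). -/

import Mathlib

private lemma fib_like_eq (A B : ℤ → ℤ) (hA : ∀ k : ℤ, A (k + 2) = A (k + 1) + A k)
    (hB : ∀ k : ℤ, B (k + 2) = B (k + 1) + B k) (h0 : A 0 = B 0) (h1 : A 1 = B 1) :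
    ∀ k : ℤ, A k = B k := by
  have key : ∀ k : ℤ, A k = B k ∧ A (k + 1) = B (k + 1) := by
    intro k
    induction k using Int.induction_on with
    | zero => exact ⟨h0, by simpa using h1⟩
    | succ k ih =>
      refine ⟨ih.2, ?_⟩
      have hA' := hA k
      have hB' := hB k
      rw [show (k : ℤ) + 1 + 1 = k + 2 by ring, hA', hB', ih.1, ih.2]
    | pred k ih =>
      have hA' := hA (-(k : ℤ) - 1)
      have hB' := hB (-(k : ℤ) - 1)
      rw [show -(k : ℤ) - 1 + 2 = -k + 1 by ring, show -(k : ℤ) - 1 + 1 = -k by ring]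
        at hA' hB'
      constructor
      · have := ih.1; have := ih.2; linarith
      · rw [show -(k : ℤ) - 1 + 1 = -k by ring]; exact ih.1
  intro k; exact (key k).1

private lemma G_add (F : ℤ → ℤ) (hF0 : F 0 = 0) (hF1 : F 1 = 1)
    (hF : ∀ k : ℤ, F (k + 2) = F (k + 1) + F k)
    (G : ℤ → ℤ) (hG : ∀ k : ℤ, G (k + 2) = G (k + 1) + G k) (k m : ℤ) :
    G (k + m) = F m * G (k + 1) + F (m - 1) * G k := by
  have hFm1 : F (-1) = 1 := by
    have := hF (-1); norm_num at this; linarith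
  have := fib_like_eq (fun m => G (k + m)) (fun m => F m * G (k + 1) + F (m - 1) * G k)
    (by
      intro j
      have h := hG (k + j)
      rw [show k + (j + 2) = k + j + 2 by ring, show k + (j + 1) = k + j + 1 by ring, h])
    (by
      intro j
      have h := hF j
      have h' := hF (j - 1)
      rw [show j + 2 - 1 = j - 1 + 2 by ring, h, h',
        show j - 1 + 1 = j by ring, show j + 1 - 1 = j by ring]
      ring)
    (by simp [hF0, hFm1])
    (by simp [hF0, hF1]) m
  simpa using this

private lemma inv_sq (G : ℤ → ℤ) (hG : ∀ k : ℤ, G (k + 2) = G (k + 1) + G k) (s : ℤ) :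
    (G (s + 1) ^ 2 - G s * G (s + 2)) ^ 2 = (G 1 ^ 2 - G 0 * G 2) ^ 2 := by
  induction s using Int.induction_on with
  | zero => norm_num
  | succ k ih =>
    have h1 := hG (k : ℤ)
    have h2 := hG ((k : ℤ) + 1)
    rw [show (k : ℤ) + 1 + 1 = (k : ℤ) + 2 by ring] at h2 ⊢
    rw [h2, h1]
    rw [h1] at ih
    linear_combination ih
  | pred k ih =>
    have h1 := hG (-(k : ℤ) - 1)
    have h2 := hG (-(k : ℤ))
    rw [show -(k : ℤ) - 1 + 2 = -k + 1 by ring, show -(k : ℤ) - 1 + 1 = -k by ring] at h1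
    have h1' : G (-(k : ℤ) - 1) = G (-(k : ℤ) + 1) - G (-(k : ℤ)) := by linarith
    rw [show -(k : ℤ) - 1 + 1 = -k by ring, show -(k : ℤ) - 1 + 2 = -k + 1 by ring, h1']
    rw [h2] at ih
    linear_combination ih

private lemma step_key (F : ℤ → ℤ) (hF0 : F 0 = 0) (hF1 : F 1 = 1)
    (hF : ∀ k : ℤ, F (k + 2) = F (k + 1) + F k)
    (G : ℤ → ℤ) (hG : ∀ k : ℤ, G (k + 2) = G (k + 1) + G k) (s m : ℤ) :
    F (m + 2) * G (s + 1) ^ 5 + F (m - 3) * G s ^ 5 -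
        (G 1 ^ 2 - G 0 * G 2) ^ 2 * (F (m + 2) * G (s + 1) + F (m - 3) * G s) =
      5 * (G (s - 1) * G s * G (s + 1) * G (s + 2) * G (s + m)) := by
  have hm2 : F (m + 2) = 2 * F m + F (m - 1) := by
    have h1 := hF m
    have h2 := hF (m - 1)
    rw [show m - 1 + 2 = m + 1 by ring, show m - 1 + 1 = m by ring] at h2
    rw [h1, h2]; ring
  have hm3 : F (m - 3) = 2 * F (m - 1) - F m := by
    have h1 := hF (m - 3)
    have h2 := hF (m - 2)
    rw [show m - 3 + 2 = m - 1 by ring, show m - 3 + 1 = m - 2 by ring] at h1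
    rw [show m - 2 + 2 = m by ring, show m - 2 + 1 = m - 1 by ring] at h2
    linarith
  have hsm : G (s + m) = F m * G (s + 1) + F (m - 1) * G s :=
    G_add F hF0 hF1 hF G hG s m
  have hs1 : G (s - 1) = G (s + 1) - G s := by
    have h := hG (s - 1)
    rw [show s - 1 + 2 = s + 1 by ring, show s - 1 + 1 = s by ring] at h
    linarith
  have hs2 : G (s + 2) = G (s + 1) + G s := hG s
  have hlam : (G 1 ^ 2 - G 0 * G 2) ^ 2 =
      (G (s + 1) ^ 2 - G s * (G (s + 1) + G s)) ^ 2 := by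
    rw [← hs2]; exact (inv_sq G hG s).symm
  rw [hm2, hm3, hsm, hs1, hs2, hlam]
  ring

theorem weighted_sum_products (F : ℤ → ℤ) (hF0 : F 0 = 0) (hF1 : F 1 = 1)
    (hF : ∀ k : ℤ, F (k + 2) = F (k + 1) + F k)
    (G : ℤ → ℤ) (hG : ∀ k : ℤ, G (k + 2) = G (k + 1) + G k) (n : ℕ) (t m : ℤ) :
    5 * ∑ j ∈ Finset.Icc 1 n,
        (-F (m - 3)) ^ (n - j) * F (m + 2) ^ j *
          (G ((j : ℤ) + t - 1) * G ((j : ℤ) + t) * G ((j : ℤ) + t + 1) * G ((j : ℤ) + t + 2) *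
            G ((j : ℤ) + t + m)) =
      F (m + 2) ^ (n + 1) * G ((n : ℤ) + t + 1) ^ 5 -
        (-F (m - 3)) ^ n * F (m + 2) * G (t + 1) ^ 5 -
        (G 1 ^ 2 - G 0 * G 2) ^ 2 *
          (F (m + 2) ^ (n + 1) * G ((n : ℤ) + t + 1) - (-F (m - 3)) ^ n * F (m + 2) * G (t + 1)) := by
  induction n with
  | zero => simp
  | succ n ih =>
    rw [Finset.sum_Icc_succ_top (by omega : 1 ≤ n + 1)]
    have hsum : ∑ j ∈ Finset.Icc 1 n,
        (-F (m - 3)) ^ (n + 1 - j) * F (m + 2) ^ j *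
          (G ((j : ℤ) + t - 1) * G ((j : ℤ) + t) * G ((j : ℤ) + t + 1) * G ((j : ℤ) + t + 2) *
            G ((j : ℤ) + t + m)) =
        (-F (m - 3)) * ∑ j ∈ Finset.Icc 1 n,
          (-F (m - 3)) ^ (n - j) * F (m + 2) ^ j *
            (G ((j : ℤ) + t - 1) * G ((j : ℤ) + t) * G ((j : ℤ) + t + 1) * G ((j : ℤ) + t + 2) *
              G ((j : ℤ) + t + m)) := by
      rw [Finset.mul_sum]
      refine Finset.sum_congr rfl fun j hj => ?_
      have hj' : j ≤ n := (Finset.mem_Icc.mp hj).2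
      rw [show n + 1 - j = (n - j) + 1 by omega, pow_succ]
      ring
    rw [hsum, Nat.sub_self, pow_zero]
    have key := step_key F hF0 hF1 hF G hG ((n : ℤ) + t + 1) m
    push_cast
    rw [show (n : ℤ) + 1 + t = (n : ℤ) + t + 1 by ring]
    linear_combination (-F (m - 3)) * ih - F (m + 2) ^ (n + 1) * key
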